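/- Let Φ be an endomorphism of the torus 𝔾ₘ² given by a translation composed with the group endomorphism associated to a matrix A ∈ M₂(ℤ) with det A ≠ 0. If Φ^k extends to the endomorphism [X^d : Y^d : Z^d] of ℙ² (in the standard toric coordinates with 𝔾ₘ² = ℙ² \ {XYZ = 0}), then A^k = d · Id, and consequently A^i = d' · Id for some d' ≥ 1 and some i ∈ {1,2,3,4,6,8,12}. -/

import Mathlib

private lemma sq_one_le (c : ℤ) (hc : c ≠ 0) : 1 ≤ c ^ 2 := by
  rcases lt_or_gt_of_ne hc with h | h <;> nlinarith

private lemma unit_exp_eq' (a b : ℤ) (h : ∀ u : ℂˣ, u ^ a = u ^ b) : a = b := by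
  have h2 := h (Units.mk0 (2:ℂ) two_ne_zero)
  have h3 : (2:ℂ) ^ a = (2:ℂ) ^ b := by
    have := congrArg (Units.val) h2
    simpa [Units.val_zpow_eq_zpow_val] using this
  have h4 : ((2:ℝ):ℂ) ^ a = ((2:ℝ):ℂ) ^ b := by push_cast; exact_mod_cast h3
  rw [← Complex.ofReal_zpow, ← Complex.ofReal_zpow] at h4
  exact zpow_right_injective₀ (a := (2:ℝ)) (by norm_num) (by norm_num)
    (Complex.ofReal_injective h4)

private theorem iter_form (A : Matrix (Fin 2) (Fin 2) ℤ)
    (lam₁ lam₂ : ℂˣ) (Φ : ℂˣ × ℂˣ → ℂˣ × ℂˣ)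
    (hΦ : ∀ p : ℂˣ × ℂˣ,
      Φ p = (lam₁ * p.1 ^ A 0 0 * p.2 ^ A 0 1,
             lam₂ * p.1 ^ A 1 0 * p.2 ^ A 1 1)) (n : ℕ) :
    ∃ μ₁ μ₂ : ℂˣ, ∀ p : ℂˣ × ℂˣ,
      Φ^[n] p = (μ₁ * p.1 ^ (A^n) 0 0 * p.2 ^ (A^n) 0 1,
                 μ₂ * p.1 ^ (A^n) 1 0 * p.2 ^ (A^n) 1 1) := by
  induction n with
  | zero =>
    refine ⟨1, 1, fun p => ?_⟩
    simp
  | succ n ih =>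
    obtain ⟨μ₁, μ₂, h⟩ := ih
    refine ⟨lam₁ * μ₁ ^ A 0 0 * μ₂ ^ A 0 1, lam₂ * μ₁ ^ A 1 0 * μ₂ ^ A 1 1, fun p => ?_⟩
    rw [Function.iterate_succ_apply', h, hΦ]
    have e00 : (A^(n+1)) 0 0 = A 0 0 * (A^n) 0 0 + A 0 1 * (A^n) 1 0 := by
      rw [pow_succ', Matrix.mul_apply, Fin.sum_univ_two]
    have e01 : (A^(n+1)) 0 1 = A 0 0 * (A^n) 0 1 + A 0 1 * (A^n) 1 1 := by
      rw [pow_succ', Matrix.mul_apply, Fin.sum_univ_two]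
    have e10 : (A^(n+1)) 1 0 = A 1 0 * (A^n) 0 0 + A 1 1 * (A^n) 1 0 := by
      rw [pow_succ', Matrix.mul_apply, Fin.sum_univ_two]
    have e11 : (A^(n+1)) 1 1 = A 1 0 * (A^n) 0 1 + A 1 1 * (A^n) 1 1 := by
      rw [pow_succ', Matrix.mul_apply, Fin.sum_univ_two]
    rw [e00, e01, e10, e11]
    refine Prod.ext ?_ ?_ <;>
    · dsimp only
      rw [Units.ext_iff]
      push_cast [Units.val_zpow_eq_zpow_val]
      simp only [zpow_add₀ (Units.ne_zero p.1), zpow_add₀ (Units.ne_zero p.2), mul_zpow,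
        ← zpow_mul]
      ring

section powers
variable {M : Type*} [Ring M]

private theorem pow3 (A : M) (t δ : ℤ) (h : A*A = t•A - δ•(1:M)) :
    A^3 = (t^2-δ)•A - (t*δ)•(1:M) := by
  have e : A^3 = (A*A)*A := by rw [pow_succ, sq]
  rw [e]
  simp only [h, mul_smul_comm, smul_mul_assoc, mul_sub, sub_mul, smul_sub, smul_smul, mul_one, one_mul]
  module

private theorem pow4 (A : M) (t δ : ℤ) (h : A*A = t•A - δ•(1:M)) :
    A^4 = (t^3-2*t*δ)•A - (t^2*δ - δ^2)•(1:M) := by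
  have e : A^4 = (A*A)*(A*A) := by rw [(by norm_num : 4 = 2+2), pow_add, sq]
  rw [e]
  simp only [h, mul_smul_comm, smul_mul_assoc, mul_sub, sub_mul, smul_sub, smul_smul, mul_one, one_mul]
  module

private theorem pow6 (A : M) (t δ : ℤ) (h : A*A = t•A - δ•(1:M)) :
    A^6 = ((t^2-δ)^2*t - 2*(t^2-δ)*t*δ)•A - ((t^2-δ)^2*δ - (t*δ)^2)•(1:M) := by
  have e : A^6 = (A^3)*(A^3) := by rw [← pow_add]
  rw [e, pow3 A t δ h]
  simp only [h, mul_smul_comm, smul_mul_assoc, mul_sub, sub_mul, smul_sub, smul_smul, mul_one, one_mul]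
  module

end powers

private theorem CH2 {R : Type*} [CommRing R] (A : Matrix (Fin 2) (Fin 2) R) :
    A * A = A.trace • A - A.det • (1 : Matrix (Fin 2) (Fin 2) R) := by
  ext i j
  fin_cases i <;> fin_cases j <;>
    simp only [Matrix.mul_apply, Fin.sum_univ_two, Matrix.sub_apply, Matrix.smul_apply,
      Matrix.trace_fin_two, Matrix.det_fin_two, Matrix.one_apply, smul_eq_mul] <;>
    norm_num <;> ring

private theorem eig_pow {B : Matrix (Fin 2) (Fin 2) ℂ} {v : Fin 2 → ℂ} {α : ℂ}
    (hv : B.mulVec v = α • v) (n : ℕ) : (B^n).mulVec v = α^n • v := by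
  induction n with
  | zero => simp [Matrix.one_mulVec]
  | succ n ih =>
    rw [pow_succ', ← Matrix.mulVec_mulVec, ih, Matrix.mulVec_smul, hv, smul_smul, pow_succ',
      mul_comm]

private theorem eigenvalue_pow {B : Matrix (Fin 2) (Fin 2) ℂ} {α γ : ℂ} {k : ℕ} {c : ℂ}
    (hfac : (B - α•1) * (B - γ•1) = 0) (hne : B ≠ γ•1) (hBk : B^k = c•1) :
    α^k = c := by
  have hMne : B - γ•(1 : Matrix (Fin 2) (Fin 2) ℂ) ≠ 0 := fun h => hne (sub_eq_zero.mp h)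
  obtain ⟨i, j, hij⟩ : ∃ i j, (B - γ•(1 : Matrix (Fin 2) (Fin 2) ℂ)) i j ≠ 0 := by
    by_contra hc
    push_neg at hc
    exact hMne (by ext i j; exact hc i j)
  set v : Fin 2 → ℂ := (B - γ•1).mulVec (Pi.single j 1) with hvdef
  have hvi : v i = (B - γ•1) i j := by
    rw [hvdef]; simp [Matrix.mulVec_single]
  have hvine : v i ≠ 0 := by rw [hvi]; exact hij
  have hv : B.mulVec v = α • v := by
    have h0 : ((B - α•1) * (B - γ•1)).mulVec (Pi.single j 1) = 0 := by
      rw [hfac, Matrix.zero_mulVec]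
    rw [← Matrix.mulVec_mulVec, ← hvdef, Matrix.sub_mulVec, Matrix.smul_mulVec,
      Matrix.one_mulVec, sub_eq_zero] at h0
    exact h0
  have hp := eig_pow hv k
  rw [hBk] at hp
  have hvv : c • v = α^k • v := by
    rw [← hp, Matrix.smul_mulVec, Matrix.one_mulVec]
  have hcm := congrFun hvv i
  simp only [Pi.smul_apply, smul_eq_mul] at hcm
  rcases mul_eq_mul_right_iff.mp hcm with h | h
  · exact h.symm
  · exact absurd h hvine

private theorem part2 (A : Matrix (Fin 2) (Fin 2) ℤ) (hdet0 : A.det ≠ 0) (d k : ℕ)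
    (hd : 1 ≤ d) (hk : 1 ≤ k)
    (hAk : A ^ k = (d : ℤ) • (1 : Matrix (Fin 2) (Fin 2) ℤ)) :
    ∃ i ∈ ({1, 2, 3, 4, 6, 8, 12} : Finset ℕ), ∃ d' : ℤ, 1 ≤ d' ∧
      A ^ i = d' • (1 : Matrix (Fin 2) (Fin 2) ℤ) := by
  set t := A.trace with ht
  set δ := A.det with hδ
  have hdet : δ ≠ 0 := hdet0
  have hCH := CH2 A
  rw [← ht, ← hδ] at hCH
  -- uniform closing move
  have finish : ∀ n ∈ ({1, 2, 3, 4, 6} : Finset ℕ), ∀ c : ℤ, c ≠ 0 →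
      A ^ n = c • (1 : Matrix (Fin 2) (Fin 2) ℤ) →
      ∃ i ∈ ({1, 2, 3, 4, 6, 8, 12} : Finset ℕ), ∃ d' : ℤ, 1 ≤ d' ∧
        A ^ i = d' • (1 : Matrix (Fin 2) (Fin 2) ℤ) := by
    intro n hn c hc hA
    by_cases h1 : 1 ≤ c
    · exact ⟨n, by fin_cases hn <;> decide, c, h1, hA⟩
    · refine ⟨2*n, by fin_cases hn <;> decide, c^2, sq_one_le c hc, ?_⟩
      rw [mul_comm, pow_mul, hA, smul_pow, one_pow]
  by_cases hs : A 0 1 = 0 ∧ A 1 0 = 0 ∧ A 0 0 = A 1 1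
  · -- A is scalar
    obtain ⟨h01, h10, hdiag⟩ := hs
    have hA : A = (A 0 0) • 1 := by
      ext i j
      fin_cases i <;> fin_cases j <;>
        simp [Matrix.smul_apply, Matrix.one_apply, h01, h10, ← hdiag]
    have hc : A 0 0 ≠ 0 := by
      intro h
      apply hdet
      rw [hδ, Matrix.det_fin_two, h01, ← hdiag, h]
      ring
    exact finish 1 (by decide) _ hc (by rw [pow_one]; exact hA)
  · -- A is not scalar
    set B : Matrix (Fin 2) (Fin 2) ℂ := A.map (Int.cast : ℤ → ℂ) with hB
    have hBmm : B = (Int.castRingHom ℂ).mapMatrix A := rfl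
    have hBk : B ^ k = ((d:ℤ):ℂ) • 1 := by
      rw [hBmm, ← map_pow, hAk]
      ext i j
      simp only [RingHom.mapMatrix_apply, Matrix.map_apply, Matrix.smul_apply,
        Matrix.one_apply, smul_eq_mul]
      split <;> simp
    have hBns : ∀ μ : ℂ, B ≠ μ • 1 := by
      intro μ h
      apply hs
      have h01 : (A 0 1 : ℂ) = 0 := by
        have e := congrFun (congrFun h 0) 1
        simpa [hB, Matrix.map_apply, Matrix.smul_apply, Matrix.one_apply] using e
      have h10 : (A 1 0 : ℂ) = 0 := by
        have e := congrFun (congrFun h 1) 0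
        simpa [hB, Matrix.map_apply, Matrix.smul_apply, Matrix.one_apply] using e
      have h00 : (A 0 0 : ℂ) = μ := by
        have e := congrFun (congrFun h 0) 0
        simpa [hB, Matrix.map_apply, Matrix.smul_apply, Matrix.one_apply] using e
      have h11 : (A 1 1 : ℂ) = μ := by
        have e := congrFun (congrFun h 1) 1
        simpa [hB, Matrix.map_apply, Matrix.smul_apply, Matrix.one_apply] using e
      refine ⟨by exact_mod_cast h01, by exact_mod_cast h10, ?_⟩
      have : (A 0 0 : ℂ) = (A 1 1 : ℂ) := by rw [h00, h11]
      exact_mod_cast this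
    have hCHC : B * B = (t:ℂ) • B - (δ:ℂ) • 1 := by
      have hBt : B.trace = (t:ℂ) := by
        simp [Matrix.trace_fin_two, hB, Matrix.map_apply, ht]
      have hBd : B.det = (δ:ℂ) := by
        simp [Matrix.det_fin_two, hB, Matrix.map_apply, hδ]
      rw [← hBt, ← hBd]
      exact CH2 B
    obtain ⟨z, hz⟩ := IsAlgClosed.exists_pow_nat_eq ((t:ℂ)^2 - 4*(δ:ℂ)) two_pos
    set α : ℂ := ((t:ℂ) + z)/2 with hα
    set β : ℂ := ((t:ℂ) - z)/2 with hβ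
    have hsum : α + β = (t:ℂ) := by rw [hα, hβ]; ring
    have hprod : α * β = (δ:ℂ) := by
      rw [hα, hβ, show ((t:ℂ) + z)/2 * (((t:ℂ) - z)/2) = ((t:ℂ)^2 - z^2)/4 from by ring, hz]
      ring
    have hfac : (B - α•1) * (B - β•1) = 0 := by
      have expand : (B - α•1) * (B - β•1)
          = B*B - (α+β)•B + (α*β)•(1 : Matrix (Fin 2) (Fin 2) ℂ) := by
        simp only [sub_mul, mul_sub, smul_mul_assoc, mul_smul_comm, smul_smul, mul_one, one_mul]
        module
      rw [expand, hsum, hprod, hCHC]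
      module
    have hfac' : (B - β•1) * (B - α•1) = 0 := by
      have expand : (B - β•1) * (B - α•1)
          = B*B - (α+β)•B + (α*β)•(1 : Matrix (Fin 2) (Fin 2) ℂ) := by
        simp only [sub_mul, mul_sub, smul_mul_assoc, mul_smul_comm, smul_smul, mul_one, one_mul]
        module
      rw [expand, hsum, hprod, hCHC]
      module
    have hαk : α^k = ((d:ℤ):ℂ) := eigenvalue_pow hfac (hBns β) hBk
    have hβk : β^k = ((d:ℤ):ℂ) := eigenvalue_pow hfac' (hBns α) hBk
    have hdC : ((d:ℤ):ℂ) ≠ 0 := by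
      simp only [ne_eq, Int.cast_eq_zero, Nat.cast_eq_zero]
      omega
    have hαne : α ≠ 0 := fun h => hdC (by rw [← hαk, h, zero_pow (by omega : k ≠ 0)])
    have hβne : β ≠ 0 := fun h => hdC (by rw [← hβk, h, zero_pow (by omega : k ≠ 0)])
    set ζ : ℂ := α / β with hζ
    have hζk : ζ ^ k = 1 := by rw [hζ, div_pow, hαk, hβk, div_self hdC]
    have hζne : ζ ≠ 0 := div_ne_zero hαne hβne
    have hζinv : ζ⁻¹ = β / α := by rw [hζ]; simp [inv_div]
    have hδC : ((δ:ℤ):ℂ) ≠ 0 := by exact_mod_cast hdet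
    have hr : ζ + ζ⁻¹ = ((t:ℂ)^2 - 2*(δ:ℂ)) / (δ:ℂ) := by
      rw [hζinv, hζ, div_add_div _ _ hβne hαne,
        div_eq_div_iff (mul_ne_zero hβne hαne) hδC,
        show α*α + β*β = (α+β)^2 - 2*(α*β) from by ring, hsum, hprod, mul_comm β α, hprod]
    have hζint : IsIntegral ℤ ζ := by
      refine ⟨Polynomial.X ^ k - Polynomial.C 1, Polynomial.monic_X_pow_sub_C 1 (by omega), ?_⟩
      simp [hζk]
    have hζinvint : IsIntegral ℤ ζ⁻¹ := by
      have he : ζ ^ (k-1) * ζ = 1 := by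
        rw [← pow_succ, show k - 1 + 1 = k from by omega, hζk]
      rw [← eq_inv_of_mul_eq_one_left he]
      exact hζint.pow _
    have hrint : IsIntegral ℤ (ζ + ζ⁻¹) := hζint.add hζinvint
    set q : ℚ := ((t:ℚ)^2 - 2*(δ:ℚ)) / (δ:ℚ) with hq
    have hrq : ζ + ζ⁻¹ = algebraMap ℚ ℂ q := by
      rw [hr, hq, map_div₀, map_sub, map_mul, map_pow, map_intCast, map_intCast, map_ofNat]
    have hqint : IsIntegral ℤ q := by
      rw [hrq] at hrint
      exact (isIntegral_algebraMap_iff (algebraMap ℚ ℂ).injective).mp hrint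
    letI : IsIntegrallyClosed ℤ := GCDMonoid.toIsIntegrallyClosed
    obtain ⟨m, hm⟩ := IsIntegrallyClosed.isIntegral_iff.mp hqint
    have hmq : (m:ℚ) = q := by rw [← hm]; simp [eq_intCast]
    have hδQ : ((δ:ℤ):ℚ) ≠ 0 := by exact_mod_cast hdet
    have hmδ : m * δ = t^2 - 2*δ := by
      have h2 : ((m:ℚ)) * ((δ:ℤ):ℚ) = ((t:ℚ)^2 - 2*(δ:ℚ)) := by
        rw [hmq, hq, div_mul_cancel₀ _ hδQ]
      exact_mod_cast h2
    have habs : ‖ζ‖ = 1 := Complex.norm_eq_one_of_pow_eq_one hζk (by omega)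
    have habsinv : ‖ζ⁻¹‖ = 1 := by rw [norm_inv, habs]; norm_num
    have hrabs : ‖ζ + ζ⁻¹‖ ≤ 2 := by
      calc ‖ζ + ζ⁻¹‖ ≤ ‖ζ‖ + ‖ζ⁻¹‖ := norm_add_le _ _
      _ = 2 := by rw [habs, habsinv]; norm_num
    have hrm : ζ + ζ⁻¹ = ((m:ℤ):ℂ) := by
      rw [hrq, ← hm]
      simp [eq_intCast]
    have hm2 : |m| ≤ 2 := by
      rw [hrm, Complex.norm_intCast] at hrabs
      exact_mod_cast hrabs
    have ht2 : t^2 = (m+2)*δ := by linarith [hmδ]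
    obtain ⟨hml, hmr⟩ := abs_le.mp hm2
    interval_cases m
    · -- m = -2 : t = 0
      have ht0 : t = 0 := by
        have : t^2 = 0 := by rw [ht2]; ring
        exact pow_eq_zero_iff (n := 2) (by norm_num) |>.mp this
      have hA2 : A^2 = (-δ) • (1 : Matrix (Fin 2) (Fin 2) ℤ) := by
        rw [sq, hCH, ht0]
        module
      exact finish 2 (by decide) _ (neg_ne_zero.mpr hdet) hA2
    · -- m = -1 : t² = δ
      have e : t^2 = δ := by rw [ht2]; ring
      have htne : t ≠ 0 := by
        intro h
        exact hdet (by rw [← e, h]; ring)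
      have hA3 : A^3 = (-t^3) • (1 : Matrix (Fin 2) (Fin 2) ℤ) := by
        rw [pow3 A t δ hCH, show t^2 - δ = 0 from by linarith,
          show t*δ = t^3 from by linear_combination (-t)*e]
        module
      exact finish 3 (by decide) _ (neg_ne_zero.mpr (pow_ne_zero 3 htne)) hA3
    · -- m = 0 : t² = 2δ
      have e : t^2 = 2*δ := by rw [ht2]; ring
      have hA4 : A^4 = (-δ^2) • (1 : Matrix (Fin 2) (Fin 2) ℤ) := by
        rw [pow4 A t δ hCH, show t^3 - 2*t*δ = 0 from by linear_combination t*e,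
          show t^2*δ - δ^2 = δ^2 from by linear_combination δ*e]
        module
      exact finish 4 (by decide) _ (neg_ne_zero.mpr (pow_ne_zero 2 hdet)) hA4
    · -- m = 1 : t² = 3δ
      have e : t^2 = 3*δ := by rw [ht2]; ring
      have hA6 : A^6 = (-δ^3) • (1 : Matrix (Fin 2) (Fin 2) ℤ) := by
        rw [pow6 A t δ hCH,
          show (t^2-δ)^2*t - 2*(t^2-δ)*t*δ = 0 from by linear_combination (t^3 - t*δ)*e,
          show (t^2-δ)^2*δ - (t*δ)^2 = δ^3 from by linear_combination (δ*t^2)*e]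
        module
      exact finish 6 (by decide) _ (neg_ne_zero.mpr (pow_ne_zero 3 hdet)) hA6
    · -- m = 2 : contradiction with non-scalarity
      exfalso
      have hζ1 : ζ = 1 := by
        have h2 : ζ + ζ⁻¹ = 2 := by rw [hrm]; norm_num
        have h3 : ζ * (ζ + ζ⁻¹) = ζ * 2 := by rw [h2]
        rw [mul_add, mul_inv_cancel₀ hζne] at h3
        have h4 : (ζ - 1)^2 = 0 := by linear_combination h3
        have h5 := pow_eq_zero_iff (n := 2) (by norm_num) |>.mp h4
        exact sub_eq_zero.mp h5
      have hαβ : α = β := by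
        have := hζ1
        rw [hζ, div_eq_one_iff_eq hβne] at this
        exact this
      -- binomial argument with nilpotent part
      set N : Matrix (Fin 2) (Fin 2) ℂ := B - α•1 with hN
      have hNN : N * N = 0 := by rw [hN]; rw [← hαβ] at hfac; exact hfac
      have hBsum : B = α•1 + N := by rw [hN]; module
      have hbin : ∀ n : ℕ, B^(n+1) = (α^(n+1)) • (1 : Matrix (Fin 2) (Fin 2) ℂ)
          + (((n+1 : ℕ) : ℂ) * α^n) • N := by
        intro n
        induction n with
        | zero => rw [pow_one, hBsum]; push_cast; module
        | succ n ih =>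
          have : B^(n+1+1) = B^(n+1) * B := by rw [pow_succ]
          rw [this, ih, hBsum]
          simp only [add_mul, mul_add, smul_mul_assoc, mul_smul_comm, smul_smul, mul_one,
            one_mul, hNN, smul_zero]
          push_cast
          module
      have hkk := hbin (k-1)
      rw [show k - 1 + 1 = k from by omega, hBk] at hkk
      set c : ℂ := ((k : ℕ) : ℂ) * α^(k-1) with hc
      have hcN : c • N = (((d:ℤ):ℂ) - α^k) • (1 : Matrix (Fin 2) (Fin 2) ℂ) := by
        rw [sub_smul, hkk]
        module
      by_cases hcz : c = 0
      · -- α = 0, contradiction with δ ≠ 0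
        rw [hc] at hcz
        have hk0 : ((k:ℕ):ℂ) ≠ 0 := by
          simp only [ne_eq, Nat.cast_eq_zero]; omega
        have hα0 : α^(k-1) = 0 := by
          rcases mul_eq_zero.mp hcz with h | h
          · exact absurd h hk0
          · exact h
        by_cases hk1 : k = 1
        · rw [hk1] at hα0; simp at hα0
        · have : α = 0 := pow_eq_zero_iff (by omega : k - 1 ≠ 0) |>.mp hα0
          exact hαne this
      · -- B is scalar, contradiction
        have hNs : N = (c⁻¹ * (((d:ℤ):ℂ) - α^k)) • (1 : Matrix (Fin 2) (Fin 2) ℂ) := by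
          have := congrArg (fun M => c⁻¹ • M) hcN
          simpa [smul_smul, inv_mul_cancel₀ hcz] using this
        apply hBns (α + c⁻¹ * (((d:ℤ):ℂ) - α^k))
        rw [hBsum, hNs]
        module

theorem stmt_17 (A : Matrix (Fin 2) (Fin 2) ℤ) (hdet : A.det ≠ 0)
    (lam₁ lam₂ : ℂˣ) (Φ : ℂˣ × ℂˣ → ℂˣ × ℂˣ)
    (hΦ : ∀ p : ℂˣ × ℂˣ,
      Φ p = (lam₁ * p.1 ^ A 0 0 * p.2 ^ A 0 1,
             lam₂ * p.1 ^ A 1 0 * p.2 ^ A 1 1))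
    (d k : ℕ) (hd : 1 ≤ d) (hk : 1 ≤ k)
    (hext : Φ^[k] = fun p : ℂˣ × ℂˣ => (p.1 ^ d, p.2 ^ d)) :
    A ^ k = (d : ℤ) • (1 : Matrix (Fin 2) (Fin 2) ℤ) ∧
      ∃ i ∈ ({1, 2, 3, 4, 6, 8, 12} : Finset ℕ), ∃ d' : ℤ, 1 ≤ d' ∧
        A ^ i = d' • (1 : Matrix (Fin 2) (Fin 2) ℤ) := by
  obtain ⟨μ₁, μ₂, hiter⟩ := iter_form A lam₁ lam₂ Φ hΦ k
  have heq : ∀ p : ℂˣ × ℂˣ,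
      (μ₁ * p.1 ^ (A^k) 0 0 * p.2 ^ (A^k) 0 1,
       μ₂ * p.1 ^ (A^k) 1 0 * p.2 ^ (A^k) 1 1) = (p.1 ^ d, p.2 ^ d) := by
    intro p
    rw [← hiter p, hext]
  -- first coordinate with p = (u, 1)
  have hμ₁ : μ₁ = 1 := by
    have h := congrArg Prod.fst (heq (1, 1))
    simpa using h
  have hμ₂ : μ₂ = 1 := by
    have h := congrArg Prod.snd (heq (1, 1))
    simpa using h
  have he00 : (A^k) 0 0 = (d : ℤ) := by
    apply unit_exp_eq'
    intro u
    have h := congrArg Prod.fst (heq (u, 1))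
    simp only [hμ₁, one_mul, one_zpow, mul_one] at h
    rw [h, zpow_natCast]
  have he10 : (A^k) 1 0 = 0 := by
    apply unit_exp_eq'
    intro u
    have h := congrArg Prod.snd (heq (u, 1))
    simp only [hμ₂, one_mul, one_zpow, mul_one, one_pow] at h
    rw [h, zpow_zero]
  have he01 : (A^k) 0 1 = 0 := by
    apply unit_exp_eq'
    intro u
    have h := congrArg Prod.fst (heq (1, u))
    simp only [hμ₁, one_mul, one_zpow, mul_one, one_pow] at h
    rw [h, zpow_zero]
  have he11 : (A^k) 1 1 = (d : ℤ) := by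
    apply unit_exp_eq'
    intro u
    have h := congrArg Prod.snd (heq (1, u))
    simp only [hμ₂, one_mul, one_zpow, mul_one] at h
    rw [h, zpow_natCast]
  have hAk : A ^ k = (d : ℤ) • (1 : Matrix (Fin 2) (Fin 2) ℤ) := by
    ext i j
    fin_cases i <;> fin_cases j <;>
      simp [he00, he01, he10, he11, Matrix.smul_apply, Matrix.one_apply]
  exact ⟨hAk, part2 A hdet d k hd hk hAk⟩
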